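/- Let p be a prime, n ≥ 0 an integer and x an odd integer. In ℂ set θ = (1+√−3)/2, α = (1 − √−3·x)/2, β = (3 − 2θ)·p^n/7, and d = 3x² + 4p^{2n+1}, and let φ be the 2×2 complex matrix with first row (α, β) and second row (−7p·β̄, ᾱ), where the bar denotes complex conjugation. Then φ² − φ + ((1+d)/4)·I₂ = 0, where I₂ is the 2×2 identity matrix. Moreover α ∈ ℤ[θ], 7β ∈ p^n·ℤ[θ], and √−3·(2+√−3)·β ∈ p^n·ℤ[θ]. -/
import Mathlib


open Complex in
/-- Let `p` be a prime, `n ≥ 0` an integer and `x` an odd integer.  In `ℂ` set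
`θ = (1+√−3)/2`, `α = (1 − √−3·x)/2`, `β = (3 − 2θ)·p^n/7`, `d = 3x² + 4p^{2n+1}`, and
let `φ` be the `2×2` complex matrix with rows `(α, β)` and `(−7p·β̄, ᾱ)`.  Then
`φ² − φ + ((1+d)/4)·I₂ = 0`, and moreover `α ∈ ℤ[θ]`, `7β ∈ p^n·ℤ[θ]` and
`√−3·(2+√−3)·β ∈ p^n·ℤ[θ]`. -/
theorem stmt_9 (p : ℕ) (hp : p.Prime) (n : ℕ) (x : ℤ) (hx : Odd x)
    (s θ α β : ℂ) (d : ℤ)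
    (hs : s = Complex.I * Real.sqrt 3)
    (hθ : θ = (1 + s) / 2)
    (hα : α = (1 - s * x) / 2)
    (hβ : β = (3 - 2 * θ) * (p : ℂ) ^ n / 7)
    (hd : d = 3 * x ^ 2 + 4 * (p : ℤ) ^ (2 * n + 1))
    (φ : Matrix (Fin 2) (Fin 2) ℂ)
    (hφ : φ = !![α, β; -7 * (p : ℂ) * (starRingEnd ℂ) β, (starRingEnd ℂ) α]) :
    φ ^ 2 - φ + (((1 + d : ℤ) : ℂ) / 4) • (1 : Matrix (Fin 2) (Fin 2) ℂ) = 0 ∧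
    (∃ a b : ℤ, α = (a : ℂ) + (b : ℂ) * θ) ∧
    (∃ a b : ℤ, 7 * β = (p : ℂ) ^ n * ((a : ℂ) + (b : ℂ) * θ)) ∧
    (∃ a b : ℤ, s * (2 + s) * β = (p : ℂ) ^ n * ((a : ℂ) + (b : ℂ) * θ)) := by
  have hs2 : s ^ 2 = -3 := by
    rw [hs, mul_pow, Complex.I_sq, ← Complex.ofReal_pow,
      Real.sq_sqrt (by norm_num : (0:ℝ) ≤ 3)]
    norm_num
  have hcs : (starRingEnd ℂ) s = -s := by
    rw [hs]
    simp [Complex.conj_I]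
  have hcα : (starRingEnd ℂ) α = (1 + s * x) / 2 := by
    rw [hα]
    rw [map_div₀, map_sub, map_one, map_mul, hcs, map_intCast, map_ofNat]
    ring
  have hcβ : (starRingEnd ℂ) β = (2 + s) * (p : ℂ) ^ n / 7 := by
    rw [hβ, hθ]
    rw [map_div₀, map_mul, map_sub, map_mul, map_div₀, map_add, map_one, hcs,
      map_pow, map_natCast, map_ofNat, map_ofNat, map_ofNat]
    ring
  obtain ⟨k, hk⟩ := hx
  have hxk : (x : ℂ) = 2 * k + 1 := by exact_mod_cast congrArg (Int.cast : ℤ → ℂ) hk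
  refine ⟨?_, ⟨k + 1, -x, ?_⟩, ⟨3, -2, ?_⟩, ⟨-1, 2, ?_⟩⟩
  · subst hφ hd
    ext i j
    fin_cases i <;> fin_cases j <;>
      simp [pow_two, Matrix.mul_apply, Fin.sum_univ_two, Matrix.one_apply] <;>
      simp only [hcα, hcβ] <;> simp only [hα, hβ, hθ] <;>
      push_cast
    · linear_combination ((x:ℂ)^2 / 4 + (p:ℂ) * ((p:ℂ)^n)^2 / 7) * hs2
    · ring
    · ring
    · linear_combination ((x:ℂ)^2 / 4 + (p:ℂ) * ((p:ℂ)^n)^2 / 7) * hs2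
  · rw [hα, hθ]
    push_cast
    rw [hxk]
    ring
  · rw [hβ, hθ]; push_cast; ring
  · rw [hβ, hθ]
    push_cast
    linear_combination (-s * (p:ℂ)^n / 7) * hs2
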